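/- Let F be a field of characteristic 0 and let A, B be graded F-algebras with actions of a finite group W by graded algebra automorphisms. Let I_A ⊆ A, I_B ⊆ B, and I_{A⊗B} ⊆ A⊗B be the ideals generated by W-invariant elements of positive degree (for A⊗B, with the diagonal W-action). Then the natural surjection π: A⊗B → (A/I_A)⊗(B/I_B) satisfies π^{-1}(K) = I_{A⊗B}, where K ⊆ (A/I_A)⊗(B/I_B) is the ideal generated by W-invariants of positive degree. Consequently (A⊗B)/I_{A⊗B} ≅ ((A/I_A)⊗(B/I_B))/K as graded W-algebras. -/

import Mathlib

open scoped TensorProduct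

/-- The degree-`d` piece of the tensor product of two graded vector spaces:
the span of the images of `𝒳 i ⊗ 𝒴 j` with `i + j = d`. -/
noncomputable def tensorGrade {F X Y : Type*} [Field F]
    [AddCommGroup X] [Module F X] [AddCommGroup Y] [Module F Y]
    (𝒳 : ℕ → Submodule F X) (𝒴 : ℕ → Submodule F Y) (d : ℕ) :
    Submodule F (X ⊗[F] Y) :=
  ⨆ p : {p : ℕ × ℕ // p.1 + p.2 = d},
    LinearMap.range (TensorProduct.map (𝒳 p.1.1).subtype (𝒴 p.1.2).subtype)

section aux
variable {F X Y X' Y' : Type*} [Field F]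
  [AddCommGroup X] [Module F X] [AddCommGroup Y] [Module F Y]
  [AddCommGroup X'] [Module F X'] [AddCommGroup Y'] [Module F Y']

lemma range_map_subtype_mono {M M' : Submodule F X} {N N' : Submodule F Y}
    (hM : M ≤ M') (hN : N ≤ N') :
    LinearMap.range (TensorProduct.map M.subtype N.subtype) ≤
      LinearMap.range (TensorProduct.map M'.subtype N'.subtype) := by
  rw [TensorProduct.range_map_eq_span_tmul, TensorProduct.range_map_eq_span_tmul]
  apply Submodule.span_mono
  rintro t ⟨m, n, rfl⟩
  exact ⟨⟨m, hM m.2⟩, ⟨n, hN n.2⟩, rfl⟩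

lemma tensorGrade_mono {𝒳 𝒳' : ℕ → Submodule F X} {𝒴 𝒴' : ℕ → Submodule F Y}
    (hX : ∀ i, 𝒳 i ≤ 𝒳' i) (hY : ∀ i, 𝒴 i ≤ 𝒴' i) (d : ℕ) :
    tensorGrade 𝒳 𝒴 d ≤ tensorGrade 𝒳' 𝒴' d := by
  unfold tensorGrade
  refine iSup_le fun p => le_trans (range_map_subtype_mono (hX _) (hY _))
    (le_iSup (fun q : {p : ℕ × ℕ // p.1 + p.2 = d} =>
      LinearMap.range (TensorProduct.map (𝒳' q.1.1).subtype (𝒴' q.1.2).subtype)) p)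

lemma range_map_subtype_map (f : X →ₗ[F] X') (g : Y →ₗ[F] Y')
    (M : Submodule F X) (N : Submodule F Y) :
    Submodule.map (TensorProduct.map f g)
        (LinearMap.range (TensorProduct.map M.subtype N.subtype)) =
      LinearMap.range (TensorProduct.map (M.map f).subtype (N.map g).subtype) := by
  rw [← LinearMap.range_comp, ← TensorProduct.map_comp,
    TensorProduct.range_map_eq_span_tmul, TensorProduct.range_map_eq_span_tmul]
  congr 1
  ext t
  constructor
  · rintro ⟨m, n, rfl⟩
    exact ⟨⟨f m, ⟨m, m.2, rfl⟩⟩, ⟨g n, ⟨n, n.2, rfl⟩⟩, rfl⟩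
  · rintro ⟨m, n, rfl⟩
    obtain ⟨a, ha, hfa⟩ := m.2
    obtain ⟨b, hb, hgb⟩ := n.2
    exact ⟨⟨a, ha⟩, ⟨b, hb⟩, by simp [hfa, hgb]⟩

lemma tensorGrade_map_eq (f : X →ₗ[F] X') (g : Y →ₗ[F] Y')
    (𝒳 : ℕ → Submodule F X) (𝒴 : ℕ → Submodule F Y) (d : ℕ) :
    (tensorGrade 𝒳 𝒴 d).map (TensorProduct.map f g) =
      tensorGrade (fun i => (𝒳 i).map f) (fun i => (𝒴 i).map g) d := by
  rw [tensorGrade, tensorGrade, Submodule.map_iSup]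
  exact iSup_congr fun p => range_map_subtype_map f g _ _

end aux

set_option maxHeartbeats 1600000
set_option synthInstance.maxHeartbeats 200000

/-- Let `A`, `B` be graded `F`-algebras (char `F = 0`) with a finite group `W`
acting by graded algebra automorphisms, `I_A`, `I_B`, `I_{A⊗B}` the ideals
generated by the `W`-invariants of positive degree (diagonal action on
`A ⊗ B`), and `K` the ideal of `(A/I_A) ⊗ (B/I_B)` generated by the
`W`-invariants of positive degree (for the descended diagonal action,
expressed via the surjection `π`). Then `π⁻¹(K) = I_{A⊗B}`, and consequently
`(A⊗B)/I_{A⊗B} ≅ ((A/I_A)⊗(B/I_B))/K`. -/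
theorem invariant_ideal_tensor (F : Type*) [Field F] [CharZero F]
    (A B : Type*) [CommRing A] [CommRing B] [Algebra F A] [Algebra F B]
    (W : Type*) [Group W] [Finite W]
    [MulSemiringAction W A] [MulSemiringAction W B]
    [SMulCommClass W F A] [SMulCommClass W F B]
    (𝒜 : ℕ → Submodule F A) (ℬ : ℕ → Submodule F B)
    [GradedAlgebra 𝒜] [GradedAlgebra ℬ]
    (h𝒜 : ∀ (w : W) (d : ℕ), ∀ a ∈ 𝒜 d, w • a ∈ 𝒜 d)
    (hℬ : ∀ (w : W) (d : ℕ), ∀ b ∈ ℬ d, w • b ∈ ℬ d)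
    -- the ideal of `A ⊗ B` generated by `W`-invariants of positive degree
    (IAB : Ideal (A ⊗[F] B))
    (hIAB : IAB = Ideal.span {x : A ⊗[F] B |
      (∃ d : ℕ, 0 < d ∧ x ∈ tensorGrade 𝒜 ℬ d) ∧
      ∀ w : W, Algebra.TensorProduct.map
        (MulSemiringAction.toAlgHom F A w) (MulSemiringAction.toAlgHom F B w) x = x})
    -- the ideals of invariants of positive degree in `A` and `B`
    (IA : Ideal A)
    (hIA : IA = Ideal.span {a : A | (∃ d : ℕ, 0 < d ∧ a ∈ 𝒜 d) ∧ ∀ w : W, w • a = a})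
    (IB : Ideal B)
    (hIB : IB = Ideal.span {b : B | (∃ d : ℕ, 0 < d ∧ b ∈ ℬ d) ∧ ∀ w : W, w • b = b})
    -- the natural surjection `π : A ⊗ B → (A/I_A) ⊗ (B/I_B)`
    (π : A ⊗[F] B →ₐ[F] ((A ⧸ IA) ⊗[F] (B ⧸ IB)))
    (hπ : π = Algebra.TensorProduct.map (Ideal.Quotient.mkₐ F IA) (Ideal.Quotient.mkₐ F IB))
    -- the ideal generated by `W`-invariants of positive degree in the tensor
    -- product of the quotients, with the grading inherited from `A` and `B`
    -- and the `W`-action descended along `π`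
    (K : Ideal ((A ⧸ IA) ⊗[F] (B ⧸ IB)))
    (hK : K = Ideal.span {y : (A ⧸ IA) ⊗[F] (B ⧸ IB) |
      (∃ d : ℕ, 0 < d ∧ y ∈ tensorGrade
        (fun d => (𝒜 d).map (Ideal.Quotient.mkₐ F IA).toLinearMap)
        (fun d => (ℬ d).map (Ideal.Quotient.mkₐ F IB).toLinearMap) d) ∧
      ∀ w : W, ∀ x : A ⊗[F] B, π x = y →
        π (Algebra.TensorProduct.map
          (MulSemiringAction.toAlgHom F A w) (MulSemiringAction.toAlgHom F B w) x) = y}) :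
    Ideal.comap π K = IAB ∧
      Nonempty (((A ⊗[F] B) ⧸ IAB) ≃ₐ[F] (((A ⧸ IA) ⊗[F] (B ⧸ IB)) ⧸ K)) := by
  classical
  cases nonempty_fintype W
  -- abbreviation for the diagonal action
  set σ : W → (A ⊗[F] B →ₐ[F] A ⊗[F] B) := fun w => Algebra.TensorProduct.map
    (MulSemiringAction.toAlgHom F A w) (MulSemiringAction.toAlgHom F B w) with hσdef
  have hσlin : ∀ (w : W) (x : A ⊗[F] B), σ w x = TensorProduct.map
      (MulSemiringAction.toAlgHom F A w).toLinearMap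
      (MulSemiringAction.toAlgHom F B w).toLinearMap x := fun _ _ => rfl
  have hπlin : ∀ x : A ⊗[F] B, π x = TensorProduct.map
      (Ideal.Quotient.mkₐ F IA).toLinearMap (Ideal.Quotient.mkₐ F IB).toLinearMap x := by
    rw [hπ]; intro x; rfl
  -- the action preserves the grading on the tensor product
  have hσgrade : ∀ (w : W) (d : ℕ), ∀ x ∈ tensorGrade 𝒜 ℬ d, σ w x ∈ tensorGrade 𝒜 ℬ d := by
    intro w d x hx
    rw [hσlin]
    have h1 : TensorProduct.map (MulSemiringAction.toAlgHom F A w).toLinearMap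
        (MulSemiringAction.toAlgHom F B w).toLinearMap x ∈
        tensorGrade (fun i => (𝒜 i).map (MulSemiringAction.toAlgHom F A w).toLinearMap)
          (fun i => (ℬ i).map (MulSemiringAction.toAlgHom F B w).toLinearMap) d := by
      rw [← tensorGrade_map_eq]
      exact Submodule.mem_map_of_mem hx
    refine tensorGrade_mono (fun i => ?_) (fun i => ?_) d h1
    · rintro _ ⟨a, ha, rfl⟩; exact h𝒜 w i a ha
    · rintro _ ⟨b, hb, rfl⟩; exact hℬ w i b hb
  -- π maps the grading onto the quotient grading
  have hπgrade : ∀ (d : ℕ), ∀ x ∈ tensorGrade 𝒜 ℬ d, π x ∈ tensorGrade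
      (fun i => (𝒜 i).map (Ideal.Quotient.mkₐ F IA).toLinearMap)
      (fun i => (ℬ i).map (Ideal.Quotient.mkₐ F IB).toLinearMap) d := by
    intro d x hx
    rw [hπlin, ← tensorGrade_map_eq]
    exact Submodule.mem_map_of_mem hx
  have hπgrade_surj : ∀ (d : ℕ), ∀ y ∈ tensorGrade
      (fun i => (𝒜 i).map (Ideal.Quotient.mkₐ F IA).toLinearMap)
      (fun i => (ℬ i).map (Ideal.Quotient.mkₐ F IB).toLinearMap) d,
      ∃ x ∈ tensorGrade 𝒜 ℬ d, π x = y := by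
    intro d y hy
    rw [← tensorGrade_map_eq] at hy
    obtain ⟨x, hx, hxy⟩ := hy
    exact ⟨x, hx, by rw [hπlin]; exact hxy⟩
  -- composition law for the action
  have hσmul : ∀ (w' w : W) (z : A ⊗[F] B), σ w' (σ w z) = σ (w' * w) z := by
    intro w' w z
    have h : (σ w').comp (σ w) = σ (w' * w) := by
      rw [hσdef]
      simp only
      rw [← Algebra.TensorProduct.map_comp]
      congr 1 <;> · ext a; simp [mul_smul]
    exact DFunLike.congr_fun h z
  -- IA and IB are W-stable
  have hIAs : ∀ (w : W), ∀ a ∈ IA, w • a ∈ IA := by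
    intro w a ha
    rw [hIA] at ha ⊢
    induction ha using Submodule.span_induction with
    | mem x hx => rw [hx.2 w]; exact Ideal.subset_span hx
    | zero => simp
    | add x y _ _ hx hy => rw [smul_add]; exact add_mem hx hy
    | smul r x _ hx => rw [smul_eq_mul, smul_mul']; exact Ideal.mul_mem_left _ _ hx
  have hIBs : ∀ (w : W), ∀ b ∈ IB, w • b ∈ IB := by
    intro w b hb
    rw [hIB] at hb ⊢
    induction hb using Submodule.span_induction with
    | mem x hx => rw [hx.2 w]; exact Ideal.subset_span hx
    | zero => simp
    | add x y _ _ hx hy => rw [smul_add]; exact add_mem hx hy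
    | smul r x _ hx => rw [smul_eq_mul, smul_mul']; exact Ideal.mul_mem_left _ _ hx
  -- the action descends to the quotients
  set liftA : W → ((A ⧸ IA) →ₐ[F] (A ⧸ IA)) := fun w =>
    Ideal.Quotient.liftₐ IA ((Ideal.Quotient.mkₐ F IA).comp (MulSemiringAction.toAlgHom F A w))
      (fun a ha => by
        simpa [Ideal.Quotient.eq_zero_iff_mem] using hIAs w a ha)
    with hliftAdef
  set liftB : W → ((B ⧸ IB) →ₐ[F] (B ⧸ IB)) := fun w =>
    Ideal.Quotient.liftₐ IB ((Ideal.Quotient.mkₐ F IB).comp (MulSemiringAction.toAlgHom F B w))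
      (fun b hb => by
        simpa [Ideal.Quotient.eq_zero_iff_mem] using hIBs w b hb)
    with hliftBdef
  have hliftA : ∀ (w : W) (a : A),
      liftA w (Ideal.Quotient.mk IA a) = Ideal.Quotient.mk IA (w • a) := by
    intro w a
    rw [hliftAdef]
    simp [Ideal.Quotient.liftₐ_apply, Ideal.Quotient.lift_mk]
    rfl
  have hliftB : ∀ (w : W) (b : B),
      liftB w (Ideal.Quotient.mk IB b) = Ideal.Quotient.mk IB (w • b) := by
    intro w b
    rw [hliftBdef]
    simp [Ideal.Quotient.liftₐ_apply, Ideal.Quotient.lift_mk]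
    rfl
  set τ : W → (((A ⧸ IA) ⊗[F] (B ⧸ IB)) →ₐ[F] ((A ⧸ IA) ⊗[F] (B ⧸ IB))) := fun w =>
    Algebra.TensorProduct.map (liftA w) (liftB w) with hτdef
  have hτ : ∀ (w : W) (z : A ⊗[F] B), τ w (π z) = π (σ w z) := by
    intro w z
    have h : (τ w).comp π = π.comp (σ w) := by
      rw [hτdef, hπ, hσdef]
      simp only
      have hA : (liftA w).comp (Ideal.Quotient.mkₐ F IA) =
          (Ideal.Quotient.mkₐ F IA).comp (MulSemiringAction.toAlgHom F A w) := by
        ext a; simp [hliftA]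
      have hB : (liftB w).comp (Ideal.Quotient.mkₐ F IB) =
          (Ideal.Quotient.mkₐ F IB).comp (MulSemiringAction.toAlgHom F B w) := by
        ext b; simp [hliftB]
      rw [← Algebra.TensorProduct.map_comp, ← Algebra.TensorProduct.map_comp, hA, hB]
    exact DFunLike.congr_fun h z
  have hπsurj : Function.Surjective π := by
    rw [hπ]
    exact fun z => TensorProduct.map_surjective
      (Ideal.Quotient.mkₐ_surjective F (I := IA)) (Ideal.Quotient.mkₐ_surjective F (I := IB)) z
  -- the kernel of π is contained in IAB
  have hker : RingHom.ker π ≤ IAB := by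
    rw [hπ, Algebra.TensorProduct.map_ker _ _
      (Ideal.Quotient.mkₐ_surjective F (I := IA)) (Ideal.Quotient.mkₐ_surjective F (I := IB))]
    have hkA : RingHom.ker (Ideal.Quotient.mkₐ F IA) = IA := by
      ext a; simp [RingHom.mem_ker, Ideal.Quotient.eq_zero_iff_mem]
    have hkB : RingHom.ker (Ideal.Quotient.mkₐ F IB) = IB := by
      ext b; simp [RingHom.mem_ker, Ideal.Quotient.eq_zero_iff_mem]
    rw [hkA, hkB]
    apply sup_le
    · rw [Ideal.map_le_iff_le_comap, hIA, Ideal.span_le]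
      rintro a ⟨⟨d, hd, had⟩, hainv⟩
      show (Algebra.TensorProduct.includeLeft : A →ₐ[F] A ⊗[F] B) a ∈ IAB
      rw [hIAB]
      apply Ideal.subset_span
      constructor
      · refine ⟨d, hd, ?_⟩
        refine Submodule.mem_iSup_of_mem ⟨(d, 0), add_zero d⟩ ?_
        exact ⟨(⟨a, had⟩ : 𝒜 d) ⊗ₜ (⟨1, SetLike.GradedOne.one_mem⟩ : ℬ 0), by simp⟩
      · intro w
        show σ w (a ⊗ₜ 1) = a ⊗ₜ 1
        rw [hσdef]
        simp [hainv w]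
    · rw [Ideal.map_le_iff_le_comap, hIB, Ideal.span_le]
      rintro b ⟨⟨d, hd, hbd⟩, hbinv⟩
      show (Algebra.TensorProduct.includeRight : B →ₐ[F] A ⊗[F] B) b ∈ IAB
      rw [hIAB]
      apply Ideal.subset_span
      constructor
      · refine ⟨d, hd, ?_⟩
        refine Submodule.mem_iSup_of_mem ⟨(0, d), zero_add d⟩ ?_
        exact ⟨(⟨1, SetLike.GradedOne.one_mem⟩ : 𝒜 0) ⊗ₜ (⟨b, hbd⟩ : ℬ d), by simp⟩
      · intro w
        show σ w (1 ⊗ₜ b) = 1 ⊗ₜ b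
        rw [hσdef]
        simp [hbinv w]
  -- IAB ≤ comap π K
  have hle1 : IAB ≤ Ideal.comap π K := by
    rw [hIAB, Ideal.span_le]
    rintro x ⟨⟨d, hd, hxd⟩, hxinv⟩
    show π x ∈ K
    rw [hK]
    apply Ideal.subset_span
    refine ⟨⟨d, hd, hπgrade d x hxd⟩, ?_⟩
    intro w x' hx'
    have h1 : π (σ w x') = τ w (π x') := (hτ w x').symm
    have h2 : σ w x = x := hxinv w
    calc π (σ w x') = τ w (π x') := h1
      _ = τ w (π x) := by rw [hx']
      _ = π (σ w x) := hτ w x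
      _ = π x := by rw [h2]
  -- K ≤ map π IAB  (averaging argument)
  have hKle : K ≤ Ideal.map π IAB := by
    rw [hK, Ideal.span_le]
    rintro y ⟨⟨d, hd, hyd⟩, hyinv⟩
    obtain ⟨x, hxd, hxy⟩ := hπgrade_surj d y hyd
    set c : F := (Fintype.card W : F)⁻¹ with hc
    set x₀ : A ⊗[F] B := c • ∑ w : W, σ w x with hx₀
    have hsum : ∀ w' : W, σ w' (∑ w : W, σ w x) = ∑ w : W, σ w x := by
      intro w'
      rw [map_sum]
      calc (∑ w : W, σ w' (σ w x)) = ∑ w : W, σ (w' * w) x :=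
            Finset.sum_congr rfl fun w _ => hσmul w' w x
        _ = ∑ w : W, σ w x :=
            Fintype.sum_equiv (Equiv.mulLeft w') (fun w => σ (w' * w) x) (fun w => σ w x)
              (fun w => rfl)
    have hx₀inv : ∀ w' : W, σ w' x₀ = x₀ := by
      intro w'
      rw [hx₀, map_smul, hsum]
    have hx₀grade : x₀ ∈ tensorGrade 𝒜 ℬ d :=
      Submodule.smul_mem _ _ (Submodule.sum_mem _ fun w _ => hσgrade w d x hxd)
    have hcard : (Fintype.card W : F) ≠ 0 := Nat.cast_ne_zero.mpr Fintype.card_ne_zero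
    have hπx₀ : π x₀ = y := by
      rw [hx₀, map_smul, map_sum]
      rw [Finset.sum_congr rfl fun (w : W) _ => hyinv w x hxy]
      rw [Finset.sum_const, Finset.card_univ, ← Nat.cast_smul_eq_nsmul F, smul_smul, hc,
        inv_mul_cancel₀ hcard, one_smul]
    have hx₀mem : x₀ ∈ IAB := by
      rw [hIAB]
      exact Ideal.subset_span ⟨⟨d, hd, hx₀grade⟩, hx₀inv⟩
    exact hπx₀ ▸ Ideal.mem_map_of_mem π hx₀mem
  -- comap π K = IAB
  have hcomap : Ideal.comap π K = IAB := by
    refine le_antisymm ?_ hle1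
    intro z hz
    have hz' : π z ∈ Ideal.map π IAB := hKle hz
    obtain ⟨x, hxI, hfx⟩ := (Ideal.mem_map_iff_of_surjective π hπsurj).mp hz'
    have hzk : z - x ∈ RingHom.ker π := by
      simp [RingHom.mem_ker, map_sub, hfx]
    have : z = x + (z - x) := by ring
    rw [this]
    exact add_mem hxI (hker hzk)
  refine ⟨hcomap, ?_⟩
  -- the induced isomorphism
  have hφsurj : Function.Surjective ((Ideal.Quotient.mkₐ F K).comp π) :=
    (Ideal.Quotient.mkₐ_surjective F (I := K)).comp hπsurj
  have hkerφ : RingHom.ker ((Ideal.Quotient.mkₐ F K).comp π) = IAB := by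
    rw [← hcomap]
    ext z
    rw [RingHom.mem_ker, Ideal.mem_comap]
    show (Ideal.Quotient.mkₐ F K) (π z) = 0 ↔ π z ∈ K
    rw [Ideal.Quotient.mkₐ_eq_mk, Ideal.Quotient.eq_zero_iff_mem]
  exact ⟨(Ideal.quotientEquivAlgOfEq F hkerφ.symm).trans
    (Ideal.quotientKerAlgEquivOfSurjective hφsurj)⟩
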